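/- arXiv:1804.06773 — 2 statements merged into one kernel-verified Lean document; each statement's English description precedes it below -/
import Mathlib

section
/- Let α, β ≥ 0. Then for all u and v on ℝ^{1+n} with û, v̂ ≥ 0 one has the Fourier majorizations Λ_−^{−β}(uv) ≾ Λ_−^{−α−β}(Λ_+^α u · Λ_+^α v) and Λ_−^{−β}(uv) ≾ Λ_−^{−α−β}(u · Λ^α v) + u · Λ^{−β} v. -/
open MeasureTheory Complex Real
open scoped ENNReal NNReal FourierTransform ComplexConjugate

noncomputable section

/-- Spacetime `ℝ^{1+n}`: coordinate `0` is time. -/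
abbrev SpT (n : ℕ) := EuclideanSpace ℝ (Fin (n + 1))
/-- Space `ℝⁿ`. -/
abbrev SpX (n : ℕ) := EuclideanSpace ℝ (Fin n)

variable {n : ℕ}

/-- Combine a time and a space point into a spacetime point. -/
def glue (t : ℝ) (x : SpX n) : SpT n :=
  (EuclideanSpace.equiv (Fin (n + 1)) ℝ).symm (Fin.cons t (EuclideanSpace.equiv (Fin n) ℝ x))

/-- Time component. -/
def tc (z : SpT n) : ℝ := z 0

/-- Spatial part. -/
def sc (z : SpT n) : SpX n := (EuclideanSpace.equiv (Fin n) ℝ).symm (fun i => z i.succ)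

/-- Spatial norm `|ξ|` of a spacetime frequency. -/
def sn (z : SpT n) : ℝ := ‖sc z‖

/-- Japanese bracket `⟨a⟩ = (1+a²)^{1/2}`. -/
def jb (a : ℝ) : ℝ := Real.sqrt (1 + a ^ 2)

/-- symbol `|τ|+|ξ|`. -/
def wp (z : SpT n) : ℝ := |tc z| + sn z
/-- symbol `|τ|-|ξ|`. -/
def wm (z : SpT n) : ℝ := |tc z| - sn z

/-- Partial derivative in direction `μ`. -/
def pd {E : Type*} [NormedAddCommGroup E] [NormedSpace ℝ E] (μ : Fin (n + 1))
    (u : SpT n → E) : SpT n → E :=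
  fun z => fderiv ℝ u z (EuclideanSpace.single μ 1)

/-- Spatial partial derivative of a function of the space variable. -/
def pdSp {E : Type*} [NormedAddCommGroup E] [NormedSpace ℝ E] (k : Fin n)
    (f : SpX n → E) : SpX n → E :=
  fun x => fderiv ℝ f x (EuclideanSpace.single k 1)

/-- The d'Alembertian `□ = ∂^μ∂_μ = -∂_t² + Δ`. -/
def box {E : Type*} [NormedAddCommGroup E] [NormedSpace ℝ E] (u : SpT n → E) : SpT n → E :=
  fun z => -(pd 0 (pd 0 u) z) + ∑ i : Fin n, pd i.succ (pd i.succ u) z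

/-- Null form `Q_{αβ}(u,v) = ∂_α u ∂_β v - ∂_β u ∂_α v`. -/
def nullQ (α β : Fin (n + 1)) (u v : SpT n → ℂ) : SpT n → ℂ :=
  fun z => pd α u z * pd β v z - pd β u z * pd α v z

/-- Weighted (Fourier side) spacetime `L²` norm. -/
def HWnorm (n : ℕ) (w : SpT n → ℝ) (u : SpT n → ℂ) : ℝ≥0∞ :=
  eLpNorm (fun ξ : SpT n => w ξ * ‖𝓕 u ξ‖) 2 volume

/-- Wave-Sobolev norm `‖u‖_{H^{s,b}}`. -/
def HsbNorm (n : ℕ) (s b : ℝ) (u : SpT n → ℂ) : ℝ≥0∞ :=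
  HWnorm n (fun ξ => jb (sn ξ) ^ s * jb (wm ξ) ^ b) u

/-- Homogeneous wave-Sobolev norm `‖u‖_{Ḣ^{s,b}}`. -/
def HdotsbNorm (n : ℕ) (s b : ℝ) (u : SpT n → ℂ) : ℝ≥0∞ :=
  HWnorm n (fun ξ => sn ξ ^ s * jb (wm ξ) ^ b) u

/-- Weighted (Fourier side) spatial `L²` norm. -/
def HWnormSp (n : ℕ) (w : SpX n → ℝ) (f : SpX n → ℂ) : ℝ≥0∞ :=
  eLpNorm (fun ξ : SpX n => w ξ * ‖𝓕 f ξ‖) 2 volume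

/-- Sobolev norm `‖f‖_{H^s(ℝⁿ)}`. -/
def HsSpNorm (n : ℕ) (s : ℝ) (f : SpX n → ℂ) : ℝ≥0∞ := HWnormSp n (fun ξ => jb ‖ξ‖ ^ s) f

/-- Homogeneous Sobolev norm `‖f‖_{Ḣ^s(ℝⁿ)}`. -/
def HdotSpNorm (n : ℕ) (s : ℝ) (f : SpX n → ℂ) : ℝ≥0∞ := HWnormSp n (fun ξ => ‖ξ‖ ^ s) f

/-- Mixed norm `‖u‖_{L^q_t L^r_x}`. -/
def mixedNorm (n : ℕ) (q r : ℝ≥0∞) (u : SpT n → ℂ) : ℝ≥0∞ :=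
  if q = ∞ then essSup (fun t : ℝ => eLpNorm (fun x : SpX n => u (glue t x)) r volume) volume
  else (∫⁻ t : ℝ, eLpNorm (fun x : SpX n => u (glue t x)) r volume ^ q.toReal) ^ (1 / q.toReal)

/-- dual exponent -/
def dualExp (q : ℝ≥0∞) : ℝ≥0∞ :=
  if q = 1 then ∞ else if q = ∞ then 1 else ENNReal.ofReal (q.toReal / (q.toReal - 1))

/-- `v` has a nonnegative Fourier transform. -/
def NonnegFT (n : ℕ) (v : SpT n → ℂ) : Prop :=
  ∀ ξ, (𝓕 v ξ).im = 0 ∧ 0 ≤ (𝓕 v ξ).re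

/-- the norm `‖ weight ⋅ u ‖_{𝓛^q_t 𝓛^r_x}` (Fourier side weight `w`). -/
def calNormW (n : ℕ) (q r : ℝ≥0∞) (w : SpT n → ℝ) (u : SpT n → ℂ) : ℝ≥0∞ :=
  ⨆ (v : SchwartzMap (SpT n) ℂ)
    (_ : NonnegFT n v ∧ mixedNorm n (dualExp q) (dualExp r) v = 1),
      ∫⁻ ξ : SpT n, ENNReal.ofReal (w ξ) * (‖𝓕 u ξ‖₊ : ℝ≥0∞) * (‖𝓕 (v : SpT n → ℂ) ξ‖₊ : ℝ≥0∞)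

/-- `‖u‖_{𝓛^q_t 𝓛^r_x}`. -/
def calNorm (n : ℕ) (q r : ℝ≥0∞) (u : SpT n → ℂ) : ℝ≥0∞ := calNormW n q r (fun _ => 1) u

/-- Spacetime Fourier multiplier. -/
def mult (n : ℕ) (m : SpT n → ℝ) (u : SpT n → ℂ) : SpT n → ℂ :=
  𝓕⁻ (fun ξ => (m ξ : ℂ) * 𝓕 u ξ)

/-- Spatial Fourier multiplier (acting for each fixed time). -/
def multSp (n : ℕ) (m : SpX n → ℝ) (u : SpT n → ℂ) : SpT n → ℂ :=
  fun z => 𝓕⁻ (fun ξ => (m ξ : ℂ) * 𝓕 (fun x : SpX n => u (glue (tc z) x)) ξ) (sc z)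

/-- `D^α`, the spatial multiplier with symbol `|ξ|^α` (in the `2π`-normalization matching
`∂_k ↔ 2πiξ_k` of the Mathlib Fourier transform). -/
def Dop (n : ℕ) (α : ℝ) (u : SpT n → ℂ) : SpT n → ℂ :=
  multSp n (fun ξ => (2 * π * ‖ξ‖) ^ α) u

/-- Riesz transform `R_k = D^{-1}∂_k`. -/
def Riesz (n : ℕ) (k : Fin n) (u : SpT n → ℂ) : SpT n → ℂ := Dop n (-1) (pd k.succ u)

/-- `D_+`, spacetime multiplier with symbol `|τ|+|ξ|`. -/
def Dplus (n : ℕ) (u : SpT n → ℂ) : SpT n → ℂ := mult n wp u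

/-- The norm of the space `G^s` : `‖Λ_+ v‖_{H^{s-1,1/2+ε}}`. -/
def Gnorm (n : ℕ) (s ε : ℝ) (u : SpT n → ℂ) : ℝ≥0∞ :=
  HWnorm n (fun ξ => jb (wp ξ) * jb (sn ξ) ^ (s - 1) * jb (wm ξ) ^ (1 / 2 + ε)) u

/-- The norm of the space `F^{r-1}`. -/
def Fnorm (n : ℕ) (r ε : ℝ) (u : SpT n → ℂ) : ℝ≥0∞ :=
  HWnorm n (fun ξ => jb (wp ξ) * jb (sn ξ) ^ (r - 2) * jb (wm ξ) ^ (1 / 2 + ε)) u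
  + calNormW n 1 ∞
      (fun ξ => jb (wp ξ) ^ (1 / 2 + 2 * ε) * jb (sn ξ) ^ (-2 + 3 * ε) * jb (wm ξ) ^ (1 / 2 : ℝ)) u

/-- Two spacetime functions agree on the slab `[0,T] × ℝⁿ`. -/
def AgreeOn (T : ℝ) (u v : SpT n → ℂ) : Prop :=
  ∀ t ∈ Set.Icc (0 : ℝ) T, ∀ x : SpX n, u (glue t x) = v (glue t x)

/-- Restriction norm of `H^{s,b}[0,T]`. -/
def HsbNormT (n : ℕ) (s b T : ℝ) (u : SpT n → ℂ) : ℝ≥0∞ :=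
  ⨅ (U : SpT n → ℂ) (_ : AgreeOn T U u), HsbNorm n s b U

/-- Restriction norm of `G^s_T`. -/
def GnormT (n : ℕ) (s ε T : ℝ) (u : SpT n → ℂ) : ℝ≥0∞ :=
  ⨅ (U : SpT n → ℂ) (_ : AgreeOn T U u), Gnorm n s ε U

/-- Restriction norm of `F^{r-1}_T`. -/
def FnormT (n : ℕ) (r ε T : ℝ) (u : SpT n → ℂ) : ℝ≥0∞ :=
  ⨅ (U : SpT n → ℂ) (_ : AgreeOn T U u), Fnorm n r ε U

/-- membership in `H^{s,b}[0,T]`. -/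
def MemHsbT (n : ℕ) (s b T : ℝ) (u : SpT n → ℂ) : Prop :=
  ∃ U : SpT n → ℂ, AgreeOn T U u ∧ HsbNorm n s b U < ∞

/-- membership in `F^{r-1}_T`. -/
def MemFT (n : ℕ) (r ε T : ℝ) (u : SpT n → ℂ) : Prop :=
  ∃ U : SpT n → ℂ, AgreeOn T U u ∧ Fnorm n r ε U < ∞

/-- coerce a real valued function to a complex valued one -/
def toC {α : Type*} (f : α → ℝ) : α → ℂ := fun x => (f x : ℂ)


/-- The weighted convolution `∫ w₁(η)|û(η)| w₂(ζ-η)|v̂(ζ-η)| dη`, i.e. the Fourier transform at `ζ`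
of the product of the functions with Fourier transforms `w₁|û|` and `w₂|v̂|`. -/
def convW (n : ℕ) (w₁ w₂ : SpT n → ℝ) (u v : SpT n → ℂ) (ζ : SpT n) : ℝ≥0∞ :=
  ∫⁻ η : SpT n, ENNReal.ofReal (w₁ η) * (‖𝓕 u η‖₊ : ℝ≥0∞)
    * ENNReal.ofReal (w₂ (ζ - η)) * (‖𝓕 v (ζ - η)‖₊ : ℝ≥0∞)


section AuxLemmas

lemma one_le_jb (a : ℝ) : 1 ≤ jb a := by
  have h := Real.sqrt_le_sqrt (show (1:ℝ) ≤ 1 + a ^ 2 by nlinarith [sq_nonneg a])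
  simpa [jb] using h

lemma jb_pos (a : ℝ) : 0 < jb a := lt_of_lt_of_le one_pos (one_le_jb a)

lemma jb_le_jb {a b : ℝ} (h : |a| ≤ |b|) : jb a ≤ jb b := by
  apply Real.sqrt_le_sqrt
  have key : |a| ^ 2 ≤ |b| ^ 2 := pow_le_pow_left₀ (abs_nonneg a) h 2
  rw [_root_.sq_abs, _root_.sq_abs] at key
  linarith

lemma jb_add_le (a b : ℝ) : jb (a + b) ≤ 2 * jb a * jb b := by
  have h2 : 2 * jb a * jb b = Real.sqrt (4 * ((1 + a ^ 2) * (1 + b ^ 2))) := by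
    rw [show (2:ℝ) = Real.sqrt 4 by
        rw [show (4:ℝ) = 2^2 by norm_num, Real.sqrt_sq (by norm_num)],
      jb, jb, mul_assoc, ← Real.sqrt_mul (add_nonneg zero_le_one (sq_nonneg a)),
      ← Real.sqrt_mul (by norm_num : (0:ℝ) ≤ 4)]
  rw [h2, jb]
  exact Real.sqrt_le_sqrt (by nlinarith [sq_nonneg (a - b)])

lemma abs_wm_le_wp {n : ℕ} (ζ : SpT n) : |wm ζ| ≤ wp ζ := by
  have hs : (0:ℝ) ≤ sn ζ := norm_nonneg (sc ζ)
  have ht : (0:ℝ) ≤ |tc ζ| := abs_nonneg (tc ζ)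
  rw [abs_le, wm, wp]
  constructor <;> linarith

lemma tc_sub {n : ℕ} (ζ η : SpT n) : tc (ζ - η) = tc ζ - tc η := rfl

lemma sc_sub {n : ℕ} (ζ η : SpT n) : sc (ζ - η) = sc ζ - sc η := rfl

lemma wp_triangle {n : ℕ} (ζ η : SpT n) : wp ζ ≤ wp η + wp (ζ - η) := by
  have h1 : |tc ζ| ≤ |tc η| + |tc (ζ - η)| := by
    rw [tc_sub]
    calc |tc ζ| = |tc η + (tc ζ - tc η)| := by ring_nf
    _ ≤ _ := abs_add_le _ _
  have h2 : sn ζ ≤ sn η + sn (ζ - η) := by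
    rw [sn, sn, sn, sc_sub]
    calc ‖sc ζ‖ = ‖sc η + (sc ζ - sc η)‖ := by rw [add_sub_cancel]
    _ ≤ _ := norm_add_le _ _
  rw [wp, wp, wp]; linarith

lemma wp_nonneg {n : ℕ} (ζ : SpT n) : (0:ℝ) ≤ wp ζ := by
  rw [wp, sn]; exact add_nonneg (abs_nonneg _) (norm_nonneg _)

lemma key1 {n : ℕ} (ζ η : SpT n) : jb (wm ζ) ≤ 2 * jb (wp η) * jb (wp (ζ - η)) := by
  have h1 : jb (wm ζ) ≤ jb (wp ζ) := jb_le_jb (by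
    rw [_root_.abs_of_nonneg (wp_nonneg ζ)]; exact abs_wm_le_wp ζ)
  have h2 : jb (wp ζ) ≤ jb (wp η + wp (ζ - η)) := jb_le_jb (by
    rw [_root_.abs_of_nonneg (wp_nonneg ζ),
      _root_.abs_of_nonneg (add_nonneg (wp_nonneg η) (wp_nonneg _))]
    exact wp_triangle ζ η)
  exact h1.trans (h2.trans (jb_add_le _ _))

lemma jb_rpow_nonneg (a t : ℝ) : 0 ≤ jb a ^ t := Real.rpow_nonneg (jb_pos a).le t

lemma jb_rpow_split {a : ℝ} (α β : ℝ) : jb a ^ (-β) = jb a ^ (-α - β) * jb a ^ α := by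
  rw [← Real.rpow_add (jb_pos a)]; ring_nf

lemma real_key1 {n : ℕ} {α β : ℝ} (hα : 0 ≤ α) (hβ : 0 ≤ β) (ζ η : SpT n) :
    jb (wm ζ) ^ (-β) ≤
      2 ^ α * (jb (wm ζ) ^ (-α - β) * (jb (wp η) ^ α * jb (wp (ζ - η)) ^ α)) := by
  have h : jb (wm ζ) ^ α ≤ 2 ^ α * jb (wp η) ^ α * jb (wp (ζ - η)) ^ α := by
    have h0 := Real.rpow_le_rpow (jb_pos (wm ζ)).le (key1 ζ η) hα
    rwa [Real.mul_rpow (mul_nonneg (by norm_num) (jb_pos _).le) (jb_pos _).le,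
      Real.mul_rpow (by norm_num) (jb_pos _).le] at h0
  calc jb (wm ζ) ^ (-β) = jb (wm ζ) ^ (-α - β) * jb (wm ζ) ^ α := jb_rpow_split α β
    _ ≤ jb (wm ζ) ^ (-α - β) * (2 ^ α * jb (wp η) ^ α * jb (wp (ζ - η)) ^ α) :=
        mul_le_mul_of_nonneg_left h (jb_rpow_nonneg _ _)
    _ = _ := by ring

lemma real_key2a {n : ℕ} {α β : ℝ} (hα : 0 ≤ α) (ζ η : SpT n)
    (hc : jb (wm ζ) ≤ jb (sn (ζ - η))) :
    jb (wm ζ) ^ (-β) ≤ jb (wm ζ) ^ (-α - β) * jb (sn (ζ - η)) ^ α := by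
  calc jb (wm ζ) ^ (-β) = jb (wm ζ) ^ (-α - β) * jb (wm ζ) ^ α := jb_rpow_split α β
    _ ≤ _ := mul_le_mul_of_nonneg_left
        (Real.rpow_le_rpow (jb_pos _).le hc hα) (jb_rpow_nonneg _ _)

lemma real_key2b {n : ℕ} {β : ℝ} (hβ : 0 ≤ β) (ζ η : SpT n)
    (hc : jb (sn (ζ - η)) ≤ jb (wm ζ)) :
    jb (wm ζ) ^ (-β) ≤ jb (sn (ζ - η)) ^ (-β) :=
  Real.rpow_le_rpow_of_nonpos (jb_pos _) hc (neg_nonpos.mpr hβ)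

lemma one_le_two_rpow {α : ℝ} (hα : 0 ≤ α) : (1:ℝ) ≤ 2 ^ α :=
  Real.one_le_rpow one_le_two hα

end AuxLemmas

/-- Lemma 4.1 (Klainerman-Selberg, Lemma 8.10): for `α, β ≥ 0` and `û, v̂ ≥ 0`,
`Λ_-^{-β}(uv) ≾ Λ_-^{-α-β}(Λ_+^α u Λ_+^α v)` and
`Λ_-^{-β}(uv) ≾ Λ_-^{-α-β}(u Λ^α v) + u Λ^{-β} v`. -/
theorem lambda_minus_majorization (n : ℕ) (α β : ℝ) (hα : 0 ≤ α) (hβ : 0 ≤ β) :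
    ∃ C : ℝ≥0, 0 < C ∧ ∀ u v : SchwartzMap (SpT n) ℂ,
      NonnegFT n ⇑u → NonnegFT n ⇑v → ∀ ζ : SpT n,
      ENNReal.ofReal (jb (wm ζ) ^ (-β)) * convW n (fun _ => 1) (fun _ => 1) ⇑u ⇑v ζ
          ≤ C * (ENNReal.ofReal (jb (wm ζ) ^ (-α - β))
              * convW n (fun η => jb (wp η) ^ α) (fun η => jb (wp η) ^ α) ⇑u ⇑v ζ)
      ∧ ENNReal.ofReal (jb (wm ζ) ^ (-β)) * convW n (fun _ => 1) (fun _ => 1) ⇑u ⇑v ζ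
          ≤ C * (ENNReal.ofReal (jb (wm ζ) ^ (-α - β))
                * convW n (fun _ => 1) (fun η => jb (sn η) ^ α) ⇑u ⇑v ζ
              + convW n (fun _ => 1) (fun η => jb (sn η) ^ (-β)) ⇑u ⇑v ζ) := by
  refine ⟨Real.toNNReal (2 ^ α), Real.toNNReal_pos.mpr (Real.rpow_pos_of_pos two_pos α), ?_⟩
  intro u v hu hv ζ
  have hCoe : ((Real.toNNReal ((2:ℝ) ^ α) : ℝ≥0) : ℝ≥0∞) = ENNReal.ofReal ((2:ℝ) ^ α) := rfl
  -- continuity facts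
  have hA : Measurable fun η : SpT n => ((‖𝓕 (⇑u) η‖₊ : ℝ≥0) : ℝ≥0∞) := by
    rw [← SchwartzMap.fourier_coe]
    exact (ENNReal.continuous_coe.comp
      (SchwartzMap.fourierTransformCLM ℂ u).continuous.nnnorm).measurable
  have hB : Measurable fun η : SpT n => ((‖𝓕 (⇑v) (ζ - η)‖₊ : ℝ≥0) : ℝ≥0∞) := by
    have h1 : Continuous fun η : SpT n => ((‖𝓕 (⇑v) η‖₊ : ℝ≥0) : ℝ≥0∞) := by
      rw [← SchwartzMap.fourier_coe]
      exact ENNReal.continuous_coe.comp (SchwartzMap.fourierTransformCLM ℂ v).continuous.nnnorm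
    exact (h1.comp (continuous_const.sub continuous_id)).measurable
  have hsnc : Continuous fun η : SpT n => jb (sn (ζ - η)) := by
    have hsc : Continuous fun z : SpT n => sc z := by
      unfold sc
      exact (EuclideanSpace.equiv (Fin n) ℝ).symm.continuous.comp
        (continuous_pi fun i => (EuclideanSpace.proj (i.succ : Fin (n+1))).continuous)
    have : Continuous fun z : SpT n => jb (sn z) := by
      unfold jb sn
      exact Real.continuous_sqrt.comp
        (continuous_const.add ((hsc.norm).pow 2))
    exact this.comp (continuous_const.sub continuous_id)
  have hW : ∀ t : ℝ, Measurable fun η : SpT n => ENNReal.ofReal (jb (sn (ζ - η)) ^ t) := by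
    intro t
    exact (ENNReal.continuous_ofReal.comp
      (hsnc.rpow_const fun x => Or.inl (jb_pos _).ne')).measurable
  simp only [convW, ENNReal.ofReal_one, one_mul, mul_one]
  constructor
  · -- first inequality
    rw [← lintegral_const_mul' _ _ ENNReal.ofReal_ne_top,
      ← lintegral_const_mul' _ _ ENNReal.ofReal_ne_top,
      ← lintegral_const_mul' _ _ ENNReal.coe_ne_top]
    refine lintegral_mono fun η => ?_
    have hsc1 : ENNReal.ofReal (jb (wm ζ) ^ (-β)) ≤
        ENNReal.ofReal ((2:ℝ) ^ α) * ENNReal.ofReal (jb (wm ζ) ^ (-α - β)) *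
          ENNReal.ofReal (jb (wp η) ^ α) * ENNReal.ofReal (jb (wp (ζ - η)) ^ α) := by
      rw [← ENNReal.ofReal_mul (Real.rpow_nonneg (by norm_num) α),
        ← ENNReal.ofReal_mul (mul_nonneg (Real.rpow_nonneg (by norm_num) α)
            (jb_rpow_nonneg _ _)),
        ← ENNReal.ofReal_mul (mul_nonneg (mul_nonneg (Real.rpow_nonneg (by norm_num) α)
            (jb_rpow_nonneg _ _)) (jb_rpow_nonneg _ _))]
      exact ENNReal.ofReal_le_ofReal (by
        have := real_key1 hα hβ ζ η
        calc jb (wm ζ) ^ (-β) ≤ _ := this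
          _ = _ := by ring)
    calc ENNReal.ofReal (jb (wm ζ) ^ (-β)) * ((‖𝓕 (⇑u) η‖₊ : ℝ≥0∞) * (‖𝓕 (⇑v) (ζ - η)‖₊ : ℝ≥0∞))
        ≤ (ENNReal.ofReal ((2:ℝ) ^ α) * ENNReal.ofReal (jb (wm ζ) ^ (-α - β)) *
            ENNReal.ofReal (jb (wp η) ^ α) * ENNReal.ofReal (jb (wp (ζ - η)) ^ α)) *
            ((‖𝓕 (⇑u) η‖₊ : ℝ≥0∞) * (‖𝓕 (⇑v) (ζ - η)‖₊ : ℝ≥0∞)) := mul_le_mul_left hsc1 _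
      _ = _ := by rw [hCoe]; ring
  · -- second inequality
    have hmeas : Measurable fun η : SpT n =>
        ENNReal.ofReal ((2:ℝ) ^ α) * (ENNReal.ofReal (jb (wm ζ) ^ (-α - β)) *
          ((‖𝓕 (⇑u) η‖₊ : ℝ≥0∞) * ENNReal.ofReal (jb (sn (ζ - η)) ^ α) *
            (‖𝓕 (⇑v) (ζ - η)‖₊ : ℝ≥0∞))) :=
      measurable_const.mul (measurable_const.mul ((hA.mul (hW α)).mul hB))
    calc ENNReal.ofReal (jb (wm ζ) ^ (-β)) *
          ∫⁻ η, (‖𝓕 (⇑u) η‖₊ : ℝ≥0∞) * (‖𝓕 (⇑v) (ζ - η)‖₊ : ℝ≥0∞)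
        = ∫⁻ η, ENNReal.ofReal (jb (wm ζ) ^ (-β)) *
            ((‖𝓕 (⇑u) η‖₊ : ℝ≥0∞) * (‖𝓕 (⇑v) (ζ - η)‖₊ : ℝ≥0∞)) :=
          (lintegral_const_mul' _ _ ENNReal.ofReal_ne_top).symm
      _ ≤ ∫⁻ η, (ENNReal.ofReal ((2:ℝ) ^ α) * (ENNReal.ofReal (jb (wm ζ) ^ (-α - β)) *
            ((‖𝓕 (⇑u) η‖₊ : ℝ≥0∞) * ENNReal.ofReal (jb (sn (ζ - η)) ^ α) *
              (‖𝓕 (⇑v) (ζ - η)‖₊ : ℝ≥0∞)))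
          + ENNReal.ofReal ((2:ℝ) ^ α) *
            ((‖𝓕 (⇑u) η‖₊ : ℝ≥0∞) * ENNReal.ofReal (jb (sn (ζ - η)) ^ (-β)) *
              (‖𝓕 (⇑v) (ζ - η)‖₊ : ℝ≥0∞))) := by
          refine lintegral_mono fun η => ?_
          rcases le_total (jb (wm ζ)) (jb (sn (ζ - η))) with hc | hc
          · refine le_trans ?_ le_self_add
            have hr : jb (wm ζ) ^ (-β) ≤
                (2:ℝ) ^ α * (jb (wm ζ) ^ (-α - β) * jb (sn (ζ - η)) ^ α) := by
              have h1 := real_key2a (β := β) hα ζ η hc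
              have h2 : jb (wm ζ) ^ (-α - β) * jb (sn (ζ - η)) ^ α ≤
                  (2:ℝ) ^ α * (jb (wm ζ) ^ (-α - β) * jb (sn (ζ - η)) ^ α) :=
                le_mul_of_one_le_left (mul_nonneg (jb_rpow_nonneg _ _) (jb_rpow_nonneg _ _))
                  (one_le_two_rpow hα)
              linarith
            have hsc2 : ENNReal.ofReal (jb (wm ζ) ^ (-β)) ≤
                ENNReal.ofReal ((2:ℝ) ^ α) * ENNReal.ofReal (jb (wm ζ) ^ (-α - β)) *
                  ENNReal.ofReal (jb (sn (ζ - η)) ^ α) := by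
              rw [← ENNReal.ofReal_mul (Real.rpow_nonneg (by norm_num) α),
                ← ENNReal.ofReal_mul (mul_nonneg (Real.rpow_nonneg (by norm_num) α)
                    (jb_rpow_nonneg _ _))]
              exact ENNReal.ofReal_le_ofReal (by
                calc jb (wm ζ) ^ (-β) ≤ _ := hr
                  _ = _ := by ring)
            calc ENNReal.ofReal (jb (wm ζ) ^ (-β)) *
                  ((‖𝓕 (⇑u) η‖₊ : ℝ≥0∞) * (‖𝓕 (⇑v) (ζ - η)‖₊ : ℝ≥0∞))
                ≤ (ENNReal.ofReal ((2:ℝ) ^ α) * ENNReal.ofReal (jb (wm ζ) ^ (-α - β)) *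
                    ENNReal.ofReal (jb (sn (ζ - η)) ^ α)) *
                    ((‖𝓕 (⇑u) η‖₊ : ℝ≥0∞) * (‖𝓕 (⇑v) (ζ - η)‖₊ : ℝ≥0∞)) :=
                  mul_le_mul_left hsc2 _
              _ = _ := by ring
          · refine le_trans ?_ le_add_self
            have hr : jb (wm ζ) ^ (-β) ≤ (2:ℝ) ^ α * jb (sn (ζ - η)) ^ (-β) := by
              have h1 := real_key2b hβ ζ η hc
              have h2 : jb (sn (ζ - η)) ^ (-β) ≤ (2:ℝ) ^ α * jb (sn (ζ - η)) ^ (-β) :=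
                le_mul_of_one_le_left (jb_rpow_nonneg _ _) (one_le_two_rpow hα)
              linarith
            have hsc2 : ENNReal.ofReal (jb (wm ζ) ^ (-β)) ≤
                ENNReal.ofReal ((2:ℝ) ^ α) * ENNReal.ofReal (jb (sn (ζ - η)) ^ (-β)) := by
              rw [← ENNReal.ofReal_mul (Real.rpow_nonneg (by norm_num) α)]
              exact ENNReal.ofReal_le_ofReal hr
            calc ENNReal.ofReal (jb (wm ζ) ^ (-β)) *
                  ((‖𝓕 (⇑u) η‖₊ : ℝ≥0∞) * (‖𝓕 (⇑v) (ζ - η)‖₊ : ℝ≥0∞))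
                ≤ (ENNReal.ofReal ((2:ℝ) ^ α) * ENNReal.ofReal (jb (sn (ζ - η)) ^ (-β))) *
                    ((‖𝓕 (⇑u) η‖₊ : ℝ≥0∞) * (‖𝓕 (⇑v) (ζ - η)‖₊ : ℝ≥0∞)) :=
                  mul_le_mul_left hsc2 _
              _ = _ := by ring
      _ = (∫⁻ η, ENNReal.ofReal ((2:ℝ) ^ α) * (ENNReal.ofReal (jb (wm ζ) ^ (-α - β)) *
            ((‖𝓕 (⇑u) η‖₊ : ℝ≥0∞) * ENNReal.ofReal (jb (sn (ζ - η)) ^ α) *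
              (‖𝓕 (⇑v) (ζ - η)‖₊ : ℝ≥0∞))))
          + ∫⁻ η, ENNReal.ofReal ((2:ℝ) ^ α) *
            ((‖𝓕 (⇑u) η‖₊ : ℝ≥0∞) * ENNReal.ofReal (jb (sn (ζ - η)) ^ (-β)) *
              (‖𝓕 (⇑v) (ζ - η)‖₊ : ℝ≥0∞)) := lintegral_add_left hmeas _
      _ = ENNReal.ofReal ((2:ℝ) ^ α) * (ENNReal.ofReal (jb (wm ζ) ^ (-α - β)) *
            ∫⁻ η, (‖𝓕 (⇑u) η‖₊ : ℝ≥0∞) * ENNReal.ofReal (jb (sn (ζ - η)) ^ α) *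
              (‖𝓕 (⇑v) (ζ - η)‖₊ : ℝ≥0∞))
          + ENNReal.ofReal ((2:ℝ) ^ α) *
            ∫⁻ η, (‖𝓕 (⇑u) η‖₊ : ℝ≥0∞) * ENNReal.ofReal (jb (sn (ζ - η)) ^ (-β)) *
              (‖𝓕 (⇑v) (ζ - η)‖₊ : ℝ≥0∞) := by
          rw [lintegral_const_mul' _ _ ENNReal.ofReal_ne_top,
            lintegral_const_mul' _ _ ENNReal.ofReal_ne_top,
            lintegral_const_mul' _ _ ENNReal.ofReal_ne_top]
      _ = _ := by rw [hCoe]; ring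


end
end

section
/- Let A_ν : ℝ^{1+n} → ℝ (ν = 0,…,n) and φ : ℝ^{1+n} → ℂ be smooth, set F_{μν} := ∂_μ A_ν − ∂_ν A_μ and j_μ := Im(φ \overline{∂_μ φ}) + |φ|² A_μ, and assume Maxwell's equations ∂^ν F_{μν} = j_μ hold. Then the electromagnetic field components satisfy the wave equations □F_{k0} = Im Q_{0k}(φ, \overline{φ}) + ∂_t(A_k|φ|²) − ∂_k(A₀|φ|²) and □F_{kl} = Im Q_{lk}(φ, \overline{φ}) + ∂_l(A_k|φ|²) − ∂_k(A_l|φ|²) for all k, l ∈ {1,…,n}, where □ = ∂^μ∂_μ = −∂_t² + Δ. -/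
open MeasureTheory Complex Real
open scoped ENNReal NNReal FourierTransform ComplexConjugate

noncomputable section

variable {n : ℕ}

variable {n : ℕ} {E : Type*} [NormedAddCommGroup E] [NormedSpace ℝ E]

lemma contDiff_pd {f : SpT n → E} (hf : ContDiff ℝ (⊤:ℕ∞) f) (μ : Fin (n+1)) :
    ContDiff ℝ (⊤:ℕ∞) (pd μ f) := by
  have h := (contDiff_infty_iff_fderiv.mp hf).2
  exact (ContinuousLinearMap.apply ℝ E (EuclideanSpace.single μ 1)).contDiff.comp h

lemma pd_add {f g : SpT n → E} (hf : Differentiable ℝ f) (hg : Differentiable ℝ g)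
    (μ : Fin (n+1)) (z : SpT n) :
    pd μ (fun w => f w + g w) z = pd μ f z + pd μ g z := by
  simp [pd, fderiv_fun_add (hf z) (hg z)]

lemma pd_sub {f g : SpT n → E} (hf : Differentiable ℝ f) (hg : Differentiable ℝ g)
    (μ : Fin (n+1)) (z : SpT n) :
    pd μ (fun w => f w - g w) z = pd μ f z - pd μ g z := by
  simp [pd, fderiv_fun_sub (hf z) (hg z)]

lemma pd_neg {f : SpT n → E} (μ : Fin (n+1)) (z : SpT n) :
    pd μ (fun w => -f w) z = -pd μ f z := by
  simp [pd, fderiv_neg]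

lemma pd_sum {m : ℕ} {f : Fin m → SpT n → E} (hf : ∀ i, Differentiable ℝ (f i))
    (μ : Fin (n+1)) (z : SpT n) :
    pd μ (fun w => ∑ i, f i w) z = ∑ i, pd μ (f i) z := by
  simp [pd, fderiv_fun_sum (fun i _ => (hf i z))]

lemma fderiv_clm_comp' {G : Type*} [NormedAddCommGroup G] [NormedSpace ℝ G]
    {g : SpT n → E} (L : E →L[ℝ] G) (hg : Differentiable ℝ g) (z : SpT n) :
    fderiv ℝ (fun w => L (g w)) z = L.comp (fderiv ℝ g z) := by
  rw [show (fun w => L (g w)) = L ∘ g from rfl, fderiv_comp z L.differentiableAt (hg z), L.fderiv]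

lemma pd_comm {f : SpT n → E} (hf : ContDiff ℝ (⊤:ℕ∞) f) (μ ν : Fin (n+1)) (z : SpT n) :
    pd μ (pd ν f) z = pd ν (pd μ f) z := by
  have hsymm : IsSymmSndFDerivAt ℝ f z := by
    apply (hf.contDiffAt).isSymmSndFDerivAt
    rw [minSmoothness_of_isRCLikeNormedField]
    exact WithTop.coe_le_coe.mpr le_top
  have hd : Differentiable ℝ (fderiv ℝ f) :=
    ((contDiff_infty_iff_fderiv.mp hf).2).differentiable (by simp)
  have key : ∀ a b : Fin (n+1), pd a (pd b f) z
      = fderiv ℝ (fderiv ℝ f) z (EuclideanSpace.single a 1) (EuclideanSpace.single b 1) := by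
    intro a b
    have h1 : pd b f = fun w =>
        (ContinuousLinearMap.apply ℝ E (EuclideanSpace.single b 1)) (fderiv ℝ f w) := rfl
    rw [pd, h1, fderiv_clm_comp' (ContinuousLinearMap.apply ℝ E (EuclideanSpace.single b 1)) hd z]
    rfl
  rw [key, key, hsymm.eq]

lemma pd_mul {𝔸 : Type*} [NormedCommRing 𝔸] [NormedAlgebra ℝ 𝔸] {f g : SpT n → 𝔸}
    (hf : Differentiable ℝ f) (hg : Differentiable ℝ g) (μ : Fin (n+1)) (z : SpT n) :
    pd μ (fun w => f w * g w) z = pd μ f z * g z + f z * pd μ g z := by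
  simp only [pd, fderiv_fun_mul (hf z) (hg z), ContinuousLinearMap.add_apply,
    ContinuousLinearMap.smul_apply, smul_eq_mul]
  ring

lemma pd_conj {f : SpT n → ℂ} (hf : Differentiable ℝ f) (μ : Fin (n+1)) (z : SpT n) :
    pd μ (fun w => conj (f w)) z = conj (pd μ f z) := by
  rw [pd, show (fun w => conj (f w)) = fun w => (Complex.conjCLE : ℂ →L[ℝ] ℂ) (f w) from rfl,
    fderiv_clm_comp' _ hf z]
  rfl

lemma pd_im {f : SpT n → ℂ} (hf : Differentiable ℝ f) (μ : Fin (n+1)) (z : SpT n) :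
    pd μ (fun w => (f w).im) z = (pd μ f z).im := by
  rw [pd, show (fun w => (f w).im) = fun w => (Complex.imCLM : ℂ →L[ℝ] ℝ) (f w) from rfl,
    fderiv_clm_comp' _ hf z]
  rfl


lemma maxwell_key (n : ℕ)
    (A : Fin (n + 1) → SpT n → ℝ) (φ : SpT n → ℂ)
    (hA : ∀ ν, ContDiff ℝ (⊤ : ℕ∞) (A ν)) (hφ : ContDiff ℝ (⊤ : ℕ∞) φ)
    (F : Fin (n + 1) → Fin (n + 1) → SpT n → ℝ)
    (hF : ∀ μ ν z, F μ ν z = pd μ (A ν) z - pd ν (A μ) z)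
    (j : Fin (n + 1) → SpT n → ℝ)
    (hj : ∀ μ z, j μ z = (φ z * conj (pd μ φ z)).im + ‖φ z‖ ^ 2 * A μ z)
    (hMaxwell : ∀ μ z,
      -pd 0 (F μ 0) z + ∑ k : Fin n, pd k.succ (F μ k.succ) z = j μ z)
    (μ ν : Fin (n + 1)) (z : SpT n) :
    box (F μ ν) z
      = (nullQ ν μ φ (fun w => conj (φ w)) z).im
          + pd ν (fun w => A μ w * ‖φ w‖ ^ 2) z
          - pd μ (fun w => A ν w * ‖φ w‖ ^ 2) z := by
  -- basic smoothness
  have tople : ∀ m : ℕ, (m : WithTop ℕ∞) ≤ ((⊤ : ℕ∞) : WithTop ℕ∞) := by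
    intro m; norm_cast; exact le_top
  have hA1 : ∀ a ρ, ContDiff ℝ (⊤ : ℕ∞) (pd a (A ρ)) := fun a ρ => contDiff_pd (hA ρ) a
  have hA2 : ∀ a b ρ, ContDiff ℝ (⊤ : ℕ∞) (pd a (pd b (A ρ))) :=
    fun a b ρ => contDiff_pd (hA1 b ρ) a
  have hφ1 : ∀ a, ContDiff ℝ (⊤ : ℕ∞) (pd a φ) := fun a => contDiff_pd hφ a
  have dφ : Differentiable ℝ φ := hφ.differentiable (by simp)
  have dφ1 : ∀ a, Differentiable ℝ (pd a φ) := fun a => (hφ1 a).differentiable (by simp)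
  -- F as a function and its smoothness
  have hFf : ∀ a b, F a b = fun w => pd a (A b) w - pd b (A a) w := fun a b => funext (hF a b)
  have hFs : ∀ a b, ContDiff ℝ (⊤ : ℕ∞) (F a b) := by
    intro a b; rw [hFf]; exact (hA1 a b).sub (hA1 b a)
  -- second derivatives of F in terms of third derivatives of A
  have E1 : ∀ a b c, pd a (F b c)
      = fun w => pd a (pd b (A c)) w - pd a (pd c (A b)) w := by
    intro a b c; funext w; rw [hFf]
    exact pd_sub ((hA1 b c).differentiable (by simp)) ((hA1 c b).differentiable (by simp)) a w
  have E2 : ∀ a b c d, pd a (pd b (F c d)) z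
      = pd a (pd b (pd c (A d))) z - pd a (pd b (pd d (A c))) z := by
    intro a b c d
    rw [E1 b c d]
    exact pd_sub ((hA2 b c d).differentiable (by simp)) ((hA2 b d c).differentiable (by simp)) a z
  -- permutations of the first three derivatives
  have P12 : ∀ a b c ρ, pd a (pd b (pd c (A ρ))) z = pd b (pd a (pd c (A ρ))) z :=
    fun a b c ρ => pd_comm (hA1 c ρ) a b z
  have P23 : ∀ a b c ρ, pd a (pd b (pd c (A ρ))) z = pd a (pd c (pd b (A ρ))) z := by
    intro a b c ρ
    have : pd b (pd c (A ρ)) = pd c (pd b (A ρ)) := funext fun w => pd_comm (hA ρ) b c w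
    rw [this]
  have P13 : ∀ a b c ρ, pd a (pd b (pd c (A ρ))) z = pd c (pd b (pd a (A ρ))) z := by
    intro a b c ρ; rw [P12, P23, P12]
  -- derivative of Maxwell's equation
  have DJ : ∀ a b, pd a (j b) z
      = -pd a (pd 0 (F b 0)) z + ∑ i : Fin n, pd a (pd i.succ (F b i.succ)) z := by
    intro a b
    have hMf : (fun w => -pd 0 (F b 0) w + ∑ i : Fin n, pd i.succ (F b i.succ) w) = j b :=
      funext (hMaxwell b)
    have d1 : Differentiable ℝ (fun w => -pd 0 (F b 0) w) :=
      (((contDiff_pd (hFs b 0) 0)).differentiable (by simp)).neg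
    have d2 : ∀ i : Fin n, Differentiable ℝ (pd i.succ (F b i.succ)) :=
      fun i => (contDiff_pd (hFs b i.succ) i.succ).differentiable (by simp)
    have d3 : Differentiable ℝ (fun w => ∑ i : Fin n, pd i.succ (F b i.succ) w) :=
      Differentiable.fun_sum (fun i _ => d2 i)
    rw [← hMf, pd_add d1 d3 a z, pd_sum d2 a z, pd_neg a z]
  -- box F = ∂ν j_μ - ∂μ j_ν
  have key : box (F μ ν) z = pd ν (j μ) z - pd μ (j ν) z := by
    rw [DJ, DJ]
    show -(pd 0 (pd 0 (F μ ν)) z) + ∑ i : Fin n, pd i.succ (pd i.succ (F μ ν)) z = _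
    simp only [E2]
    have hsum : ∀ i : Fin n,
        (pd ν (pd i.succ (pd μ (A i.succ))) z - pd ν (pd i.succ (pd i.succ (A μ))) z)
          - (pd μ (pd i.succ (pd ν (A i.succ))) z - pd μ (pd i.succ (pd i.succ (A ν))) z)
        = pd i.succ (pd i.succ (pd μ (A ν))) z - pd i.succ (pd i.succ (pd ν (A μ))) z := by
      intro i
      have c1 : pd ν (pd i.succ (pd μ (A i.succ))) z = pd μ (pd i.succ (pd ν (A i.succ))) z :=
        P13 ν i.succ μ i.succ
      have c2 : pd ν (pd i.succ (pd i.succ (A μ))) z = pd i.succ (pd i.succ (pd ν (A μ))) z := by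
        rw [P13 ν i.succ i.succ μ, P23]
      have c3 : pd μ (pd i.succ (pd i.succ (A ν))) z = pd i.succ (pd i.succ (pd μ (A ν))) z := by
        rw [P13 μ i.succ i.succ ν, P23]
      rw [c1, c2, c3]; ring
    have hS : (∑ i : Fin n, (pd ν (pd i.succ (pd μ (A i.succ))) z
            - pd ν (pd i.succ (pd i.succ (A μ))) z))
          - (∑ i : Fin n, (pd μ (pd i.succ (pd ν (A i.succ))) z
            - pd μ (pd i.succ (pd i.succ (A ν))) z))
        = ∑ i : Fin n, (pd i.succ (pd i.succ (pd μ (A ν))) z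
            - pd i.succ (pd i.succ (pd ν (A μ))) z) := by
      rw [← Finset.sum_sub_distrib]
      exact Finset.sum_congr rfl fun i _ => hsum i
    have c4 : pd ν (pd 0 (pd μ (A 0))) z = pd μ (pd 0 (pd ν (A 0))) z := P13 ν 0 μ 0
    have c5 : pd ν (pd 0 (pd 0 (A μ))) z = pd 0 (pd 0 (pd ν (A μ))) z := by
      rw [P13 ν 0 0 μ, P23]
    have c6 : pd μ (pd 0 (pd 0 (A ν))) z = pd 0 (pd 0 (pd μ (A ν))) z := by
      rw [P13 μ 0 0 ν, P23]
    linarith [hS, c4, c5, c6]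
  -- expansion of ∂a (j b)
  have dconj : ∀ b, Differentiable ℝ (fun w => conj (pd b φ w)) := by
    intro b
    exact (Complex.conjCLE : ℂ →L[ℝ] ℂ).differentiable.comp (dφ1 b)
  have dprod : ∀ b, Differentiable ℝ (fun w => φ w * conj (pd b φ w)) :=
    fun b => dφ.mul (dconj b)
  have dIm : ∀ b, Differentiable ℝ (fun w => (φ w * conj (pd b φ w)).im) := by
    intro b
    exact (Complex.imCLM : ℂ →L[ℝ] ℝ).differentiable.comp (dprod b)
  have dnsq : Differentiable ℝ (fun w => ‖φ w‖ ^ 2) := by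
    have h1 : (fun w : SpT n => ‖φ w‖ ^ 2) = fun w => (φ w).re ^ 2 + (φ w).im ^ 2 := by
      funext w
      rw [Complex.sq_norm, Complex.normSq_apply]; ring
    rw [h1]
    have hre : Differentiable ℝ (fun w : SpT n => (φ w).re) :=
      (Complex.reCLM : ℂ →L[ℝ] ℝ).differentiable.comp dφ
    have him : Differentiable ℝ (fun w : SpT n => (φ w).im) :=
      (Complex.imCLM : ℂ →L[ℝ] ℝ).differentiable.comp dφ
    exact (hre.pow 2).add (him.pow 2)
  have dA : ∀ b, Differentiable ℝ (fun w => ‖φ w‖ ^ 2 * A b w) :=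
    fun b => dnsq.mul ((hA b).differentiable (by simp))
  have JX : ∀ a b, pd a (j b) z
      = (pd a φ z * conj (pd b φ z) + φ z * conj (pd a (pd b φ) z)).im
        + pd a (fun w => ‖φ w‖ ^ 2 * A b w) z := by
    intro a b
    have hjf : j b = fun w => (φ w * conj (pd b φ w)).im + ‖φ w‖ ^ 2 * A b w :=
      funext (hj b)
    rw [hjf, pd_add (dIm b) (dA b) a z, pd_im (dprod b) a z,
      pd_mul dφ (dconj b) a z, pd_conj (dφ1 b) a z]
  -- put it together
  rw [key, JX, JX]
  have hcφ : pd ν (pd μ φ) z = pd μ (pd ν φ) z := pd_comm hφ ν μ z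
  have hAμ : (fun w => A μ w * ‖φ w‖ ^ 2) = fun w => ‖φ w‖ ^ 2 * A μ w := by
    funext w; ring
  have hAν : (fun w => A ν w * ‖φ w‖ ^ 2) = fun w => ‖φ w‖ ^ 2 * A ν w := by
    funext w; ring
  have hQ : nullQ ν μ φ (fun w => conj (φ w)) z
      = pd ν φ z * conj (pd μ φ z) - pd μ φ z * conj (pd ν φ z) := by
    have h1 : ∀ a : Fin (n+1), pd a (fun w => conj (φ w)) z = conj (pd a φ z) :=
      fun a => pd_conj dφ a z
    rw [nullQ, h1, h1]
  rw [hAμ, hAν, hQ, hcφ]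
  simp only [Complex.add_im, Complex.sub_im]
  ring

/-- Null structure in the Maxwell part: if `∂^ν F_{μν} = j_μ` then
`□F_{k0} = Im Q_{0k}(φ,φ̄) + ∂_t(A_k|φ|²) - ∂_k(A₀|φ|²)` and
`□F_{kl} = Im Q_{lk}(φ,φ̄) + ∂_l(A_k|φ|²) - ∂_k(A_l|φ|²)`. -/
theorem maxwell_null_structure (n : ℕ)
    (A : Fin (n + 1) → SpT n → ℝ) (φ : SpT n → ℂ)
    (hA : ∀ ν, ContDiff ℝ (⊤ : ℕ∞) (A ν)) (hφ : ContDiff ℝ (⊤ : ℕ∞) φ)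
    (F : Fin (n + 1) → Fin (n + 1) → SpT n → ℝ)
    (hF : ∀ μ ν z, F μ ν z = pd μ (A ν) z - pd ν (A μ) z)
    (j : Fin (n + 1) → SpT n → ℝ)
    (hj : ∀ μ z, j μ z = (φ z * conj (pd μ φ z)).im + ‖φ z‖ ^ 2 * A μ z)
    (hMaxwell : ∀ μ z,
      -pd 0 (F μ 0) z + ∑ k : Fin n, pd k.succ (F μ k.succ) z = j μ z) :
    ∀ (k l : Fin n) (z : SpT n),
      box (F k.succ 0) z
        = (nullQ 0 k.succ φ (fun w => conj (φ w)) z).im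
            + pd 0 (fun w => A k.succ w * ‖φ w‖ ^ 2) z
            - pd k.succ (fun w => A 0 w * ‖φ w‖ ^ 2) z
      ∧ box (F k.succ l.succ) z
        = (nullQ l.succ k.succ φ (fun w => conj (φ w)) z).im
            + pd l.succ (fun w => A k.succ w * ‖φ w‖ ^ 2) z
            - pd k.succ (fun w => A l.succ w * ‖φ w‖ ^ 2) z := by
  intro k l z
  exact ⟨maxwell_key n A φ hA hφ F hF j hj hMaxwell k.succ 0 z,
    maxwell_key n A φ hA hφ F hF j hj hMaxwell k.succ l.succ z⟩

end
end
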